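/- Invariant of the filter protocol: for every n > 0, every m ∈ ℕ, and every configuration γ reachable in F_n from ⟨s_0^m, 0⟩, it holds that for all j with 0 ≤ j ≤ min(m, n): Σ_{k=0}^{j} st(γ)(s_k) ≥ j + [data(γ) = j+1], where [·] is the indicator function. -/

import Mathlib

/-- Operation type of a register protocol: read or write. -/
inductive Op : Type
  | R : Op
  | W : Op
deriving DecidableEq

instance instFintypeOp : Fintype Op :=
  ⟨{Op.R, Op.W}, fun x => by cases x <;> simp⟩

/-- A location has at least one outgoing transition. -/
def Nonblock {Q D : Type*} (T : Set (Q × Op × D × Q)) : Prop :=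
  ∀ q : Q, ∃ op d q', (q, op, d, q') ∈ T

/-- Whenever a read transition exists from `q`, reads of every datum are enabled in `q`. -/
def ReadTotal {Q D : Type*} (T : Set (Q × Op × D × Q)) : Prop :=
  ∀ q d' q', (q, Op.R, d', q') ∈ T → ∀ d : D, ∃ qd, (q, Op.R, d, qd) ∈ T

/-- One step of the distributed system associated with transition set `T`:
a configuration is a pair of a finite multiset of locations and a register datum. -/
def IsStep {Q D : Type*} [DecidableEq Q] (T : Set (Q × Op × D × Q)) :
    Multiset Q × D → Multiset Q × D → Prop := fun γ γ' =>
  ∃ q op d'' q', (q, op, d'', q') ∈ T ∧ q ∈ γ.1 ∧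
    γ'.1 = γ.1 - {q} + {q'} ∧
    ((op = Op.R ∧ γ.2 = d'' ∧ γ'.2 = d'') ∨ (op = Op.W ∧ γ'.2 = d''))

/-- Reachability: reflexive-transitive closure of the step relation. -/
def Reach {Q D : Type*} [DecidableEq Q] (T : Set (Q × Op × D × Q)) :
    Multiset Q × D → Multiset Q × D → Prop :=
  Relation.ReflTransGen (IsStep T)

/-- `PostStar T S` is the set of configurations reachable from some configuration of `S`. -/
def PostStar {Q D : Type*} [DecidableEq Q] (T : Set (Q × Op × D × Q))
    (S : Set (Multiset Q × D)) : Set (Multiset Q × D) :=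
  {γ' | ∃ γ ∈ S, Reach T γ γ'}

/-- `PreStar T S` is the set of configurations from which some configuration of `S`
is reachable. -/
def PreStar {Q D : Type*} [DecidableEq Q] (T : Set (Q × Op × D × Q))
    (S : Set (Multiset Q × D)) : Set (Multiset Q × D) :=
  {γ | ∃ γ' ∈ S, Reach T γ γ'}

/-- `[qf]`: configurations containing at least one process in location `qf`. -/
def TargetSet {Q D : Type*} [DecidableEq Q] (qf : Q) : Set (Multiset Q × D) :=
  {γ | 0 < γ.1.count qf}

/-- The order `⪯` on configurations: same register content, same support,
and componentwise smaller multiset. -/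
def ConfLE {Q D : Type*} [DecidableEq Q] (γ γ' : Multiset Q × D) : Prop :=
  γ.2 = γ'.2 ∧ γ.1.toFinset = γ'.1.toFinset ∧ γ.1 ≤ γ'.1

/-- Upward closure of a set of configurations with respect to `⪯`. -/
def UpSet {Q D : Type*} [DecidableEq Q] (B : Set (Multiset Q × D)) :
    Set (Multiset Q × D) :=
  {γ' | ∃ γ ∈ B, ConfLE γ γ'}

/-- Transitions of the filter protocol `F_n` (for `n > 0`): locations
`s_0, …, s_n` are `Fin (n+1)`, data `0, …, n−1` are `Fin n`. Transitions:
`(s_0, W, 0, s_0)`; `(s_i, R, i, s_{i+1})` for `0 ≤ i ≤ n−1`;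
`(s_i, W, i, s_0)` for `1 ≤ i ≤ n−1`; and read self-loops `(s, R, d, s)` for
every pair `(s, d)` for which no other read transition is specified. -/
def FilterT (n : ℕ) : Set (Fin (n + 1) × Op × Fin n × Fin (n + 1)) := fun t =>
  match t with
  | (s, Op.W, d, s') =>
      ((s : ℕ) = 0 ∧ (d : ℕ) = 0 ∧ (s' : ℕ) = 0) ∨
      (1 ≤ (s : ℕ) ∧ (s : ℕ) ≤ n - 1 ∧ (d : ℕ) = (s : ℕ) ∧ (s' : ℕ) = 0)
  | (s, Op.R, d, s') =>
      ((s : ℕ) ≤ n - 1 ∧ (d : ℕ) = (s : ℕ) ∧ (s' : ℕ) = (s : ℕ) + 1) ∨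
      (¬ ((s : ℕ) ≤ n - 1 ∧ (d : ℕ) = (s : ℕ)) ∧ s' = s)

private lemma Ssum_cons {n : ℕ} (j : ℕ) (a : Fin (n + 1)) (ν : Multiset (Fin (n + 1))) :
    ∑ s ∈ Finset.univ.filter (fun s : Fin (n + 1) => (s : ℕ) ≤ j), (a ::ₘ ν).count s
      = (if (a : ℕ) ≤ j then 1 else 0)
        + ∑ s ∈ Finset.univ.filter (fun s : Fin (n + 1) => (s : ℕ) ≤ j), ν.count s := by
  simp only [Multiset.count_cons]
  rw [Finset.sum_add_distrib, add_comm]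
  congr 1
  rw [Finset.sum_ite_eq' (Finset.univ.filter (fun s : Fin (n + 1) => (s : ℕ) ≤ j)) a
    (fun _ => 1)]
  simp

private lemma Ssum_mono {n : ℕ} {j j' : ℕ} (h : j ≤ j') (ν : Multiset (Fin (n + 1))) :
    ∑ s ∈ Finset.univ.filter (fun s : Fin (n + 1) => (s : ℕ) ≤ j), ν.count s
      ≤ ∑ s ∈ Finset.univ.filter (fun s : Fin (n + 1) => (s : ℕ) ≤ j'), ν.count s := by
  apply Finset.sum_le_sum_of_subset
  intro s hs
  simp only [Finset.mem_filter, Finset.mem_univ, true_and] at hs ⊢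
  omega

private lemma step_inv {n : ℕ} (hn : 0 < n) {m : ℕ}
    {γ γ' : Multiset (Fin (n + 1)) × Fin n}
    (h : IsStep (FilterT n) γ γ')
    (hI : ∀ j : ℕ, j ≤ min m n →
      j + (if ((γ.2 : ℕ) = j + 1) then 1 else 0) ≤
        ∑ s ∈ Finset.univ.filter (fun s : Fin (n + 1) => (s : ℕ) ≤ j), γ.1.count s) :
    ∀ j : ℕ, j ≤ min m n →
      j + (if ((γ'.2 : ℕ) = j + 1) then 1 else 0) ≤
        ∑ s ∈ Finset.univ.filter (fun s : Fin (n + 1) => (s : ℕ) ≤ j), γ'.1.count s := by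
  obtain ⟨q, op, d'', q', hT, hq, hμ, hcase⟩ := h
  obtain ⟨ν, hν⟩ := Multiset.exists_cons_of_mem hq
  have hμ' : γ'.1 = q' ::ₘ ν := by
    rw [hμ, hν, Multiset.sub_singleton, Multiset.erase_cons_head,
      ← Multiset.singleton_add]
    exact add_comm _ _
  intro j hj
  rw [hμ', Ssum_cons]
  have hIν : ∀ j : ℕ, j ≤ min m n →
      j + (if ((γ.2 : ℕ) = j + 1) then 1 else 0) ≤
        (if (q : ℕ) ≤ j then 1 else 0)
          + ∑ s ∈ Finset.univ.filter (fun s : Fin (n + 1) => (s : ℕ) ≤ j), ν.count s := by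
    intro j hj
    have := hI j hj
    rwa [hν, Ssum_cons] at this
  rcases hcase with ⟨hop, hd, hd'⟩ | ⟨hop, hd'⟩
  · -- read
    subst hop
    change FilterT n (q, Op.R, d'', q') at hT
    simp only [FilterT] at hT
    rcases hT with ⟨hqn, hdq, hq'⟩ | ⟨_, hq'⟩
    · -- real read from s_i with i = q
      have hdγ : (γ.2 : ℕ) = (q : ℕ) := by rw [hd, hdq]
      have hdγ' : (γ'.2 : ℕ) = (q : ℕ) := by rw [hd', hdq]
      rw [hdγ']
      by_cases hji : j = (q : ℕ)
      · subst hji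
        simp only [hq']
        have h1 : ¬ ((q : ℕ) = (q : ℕ) + 1) := by omega
        have h2 : ¬ ((q : ℕ) + 1 ≤ (q : ℕ)) := by omega
        rw [if_neg h1, if_neg h2]
        rcases Nat.eq_zero_or_pos (q : ℕ) with h0 | hpos
        · omega
        · have hj1 : (q : ℕ) - 1 ≤ min m n := by omega
          have := hIν ((q : ℕ) - 1) hj1
          rw [hdγ, if_pos (by omega : (q : ℕ) = (q : ℕ) - 1 + 1),
            if_neg (by omega : ¬ (q : ℕ) ≤ (q : ℕ) - 1)] at this
          have hmono := Ssum_mono (by omega : (q : ℕ) - 1 ≤ (q : ℕ)) ν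
          omega
      · -- j ≠ i : indicator positions of q and q' agree relative to j
        have := hIν j hj
        rw [hdγ] at this
        rw [hq']
        by_cases hle : (q : ℕ) ≤ j
        · rw [if_pos (by omega : (q : ℕ) + 1 ≤ j)]
          rw [if_pos hle] at this
          rw [if_neg (by omega : ¬ (q : ℕ) = j + 1)] at this ⊢
          omega
        · rw [if_neg (by omega : ¬ (q : ℕ) + 1 ≤ j)]
          rw [if_neg hle] at this
          omega
    · -- self loop
      subst hq'
      have := hIν j hj
      have hdd : (γ'.2 : ℕ) = (γ.2 : ℕ) := by rw [hd, hd']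
      rw [hdd]
      omega
  · -- write
    subst hop
    change FilterT n (q, Op.W, d'', q') at hT
    simp only [FilterT] at hT
    rcases hT with ⟨hq0, hd0, hq'0⟩ | ⟨hq1, hqn, hdq, hq'0⟩
    · -- (s0, W, 0, s0)
      have : (γ'.2 : ℕ) = 0 := by rw [hd', hd0]
      rw [this, if_neg (by omega : ¬ (0 : ℕ) = j + 1), hq'0,
        if_pos (Nat.zero_le j)]
      have := hIν j hj
      rw [if_pos (show (q : ℕ) ≤ j by omega)] at this
      omega
    · -- (s_i, W, i, s_0)
      have hdγ' : (γ'.2 : ℕ) = (q : ℕ) := by rw [hd', hdq]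
      rw [hdγ', hq'0, if_pos (Nat.zero_le j)]
      have := hIν j hj
      by_cases hij : (q : ℕ) = j + 1
      · rw [if_pos hij]
        rw [if_neg (by omega : ¬ (q : ℕ) ≤ j)] at this
        omega
      · rw [if_neg hij]
        by_cases hle : (q : ℕ) ≤ j
        · rw [if_pos hle] at this
          omega
        · rw [if_neg hle] at this
          omega

/-- invariant of the filter protocol: for every configuration `γ`
reachable in `F_n` from `⟨s_0^m, 0⟩` and every `j ≤ min m n`,
`Σ_{k=0}^{j} st(γ)(s_k) ≥ j + [data(γ) = j+1]`. -/
theorem stmt_12 (n : ℕ) (hn : 0 < n) (m : ℕ)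
    (γ : Multiset (Fin (n + 1)) × Fin n)
    (hreach : Reach (FilterT n)
      (Multiset.replicate m (⟨0, by omega⟩ : Fin (n + 1)), (⟨0, hn⟩ : Fin n)) γ) :
    ∀ j : ℕ, j ≤ min m n →
      j + (if ((γ.2 : ℕ) = j + 1) then 1 else 0) ≤
        ∑ s ∈ Finset.univ.filter (fun s : Fin (n + 1) => (s : ℕ) ≤ j),
          γ.1.count s := by
  induction hreach with
  | refl =>
    intro j hj
    simp only
    rw [if_neg (by simp : ¬ ((⟨0, hn⟩ : Fin n) : ℕ) = j + 1)]
    have hmem : (⟨0, by omega⟩ : Fin (n + 1)) ∈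
        Finset.univ.filter (fun s : Fin (n + 1) => (s : ℕ) ≤ j) := by
      simp
    calc j + 0 ≤ m := by omega
      _ = (Multiset.replicate m (⟨0, by omega⟩ : Fin (n + 1))).count
            (⟨0, by omega⟩ : Fin (n + 1)) := by simp
      _ ≤ _ := Finset.single_le_sum
          (f := fun s => (Multiset.replicate m (⟨0, by omega⟩ : Fin (n + 1))).count s)
          (fun s _ => Nat.zero_le _) hmem
  | tail _ hstep ih =>
    exact step_inv hn hstep ih
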